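/- Let m₁₁(s) = (2i - (ξ₀+s)β)/(2q(s)) with β = 1+2iξ₀ and q(s) = 1+2is-βs². Then the imaginary part of m₁₁(s) equals η₀²/|q(s)|², where η₀² = 1 - ξ₀². In particular Im m₁₁(s) > 0 for all real s when 0 < ξ₀ < 1. -/
import Mathlib


open Complex

theorem im_m11_eq (ξ₀ η₀ : ℝ) (hξ : 0 < ξ₀ ∧ ξ₀ < 1) (hη : η₀ = Real.sqrt (1 - ξ₀ ^ 2))
    (β : ℂ) (hβ : β = 1 + 2 * I * ξ₀)
    (q : ℝ → ℂ) (hq : ∀ s : ℝ, q s = 1 + 2 * I * s - β * s ^ 2)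
    (hq0 : ∀ s : ℝ, q s ≠ 0)
    (m : ℝ → ℂ) (hm : ∀ s : ℝ, m s = (2 * I - (ξ₀ + s) * β) / (2 * q s)) :
    ∀ s : ℝ, (m s).im = η₀ ^ 2 / ‖q s‖ ^ 2 ∧ 0 < (m s).im := by
  intro s
  have h1 : (0:ℝ) < 1 - ξ₀ ^ 2 := by nlinarith [hξ.1, hξ.2]
  have hη2 : η₀ ^ 2 = 1 - ξ₀ ^ 2 := by rw [hη, Real.sq_sqrt h1.le]
  have hpos : 0 < Complex.normSq (q s) := Complex.normSq_pos.mpr (hq0 s)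
  have hnorm : ‖q s‖ ^ 2 = Complex.normSq (q s) := Complex.sq_norm (q s)
  have hre : (q s).re = 1 - s ^ 2 := by rw [hq, hβ]; simp [← Complex.ofReal_pow]; try ring
  have him : (q s).im = 2 * s - 2 * ξ₀ * s ^ 2 := by rw [hq, hβ]; simp [← Complex.ofReal_pow]; try ring
  have hkey : (m s).im = (1 - ξ₀ ^ 2) / Complex.normSq (q s) := by
    rw [hm s, Complex.div_im]
    have hNre : (2 * I - (↑ξ₀ + ↑s) * β).re = -(ξ₀ + s) := by rw [hβ]; simp; try ring
    have hNim : (2 * I - (↑ξ₀ + ↑s) * β).im = 2 - 2 * ξ₀ * (ξ₀ + s) := by rw [hβ]; simp; try ring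
    have h2re : (2 * q s).re = 2 * (q s).re := by simp
    have h2im : (2 * q s).im = 2 * (q s).im := by simp
    have h2n : Complex.normSq (2 * q s) = 4 * Complex.normSq (q s) := by
      simp [Complex.normSq_apply, h2re, h2im]; ring
    rw [hNre, hNim, h2re, h2im, h2n, hre, him]
    field_simp
    ring
  refine ⟨by rw [hkey, hη2, hnorm], by rw [hkey]; positivity⟩
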